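/- For every real a ≥ 0, every integer n ≥ 1 and every real x ≥ 0, Σ_{k=0}^{∞} k · W_{n,k}^a(x) = n·x + a·x/(1+x). -/

import Mathlib

open MeasureTheory Filter

/-- Rising factorial `(n)_i = n(n+1)⋯(n+i−1)`, with `(n)_0 = 1`. -/
noncomputable def risingFac (n i : ℕ) : ℝ := ∏ j ∈ Finset.range i, ((n : ℝ) + j)

/-- `p_k(n,a) = Σ_{i=0}^{k} C(k,i)·(n)_i·a^{k−i}`. -/
noncomputable def pCoef (n : ℕ) (a : ℝ) (k : ℕ) : ℝ :=
  ∑ i ∈ Finset.range (k + 1), (Nat.choose k i : ℝ) * risingFac n i * a ^ (k - i)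

/-- Generalized Baskakov basis function `W_{n,k}^a(x)`. -/
noncomputable def W (n : ℕ) (a : ℝ) (k : ℕ) (x : ℝ) : ℝ :=
  Real.exp (-(a * x) / (1 + x)) * (pCoef n a k / (Nat.factorial k : ℝ)) * x ^ k /
    (1 + x) ^ (k + n)

/-- Stancu-type operator `L_{n,a}^{α,β}(f;x) = Σ_k W_{n,k}^a(x) f((k+α)/(n+β))`. -/
noncomputable def Lop (n : ℕ) (a α β : ℝ) (f : ℝ → ℝ) (x : ℝ) : ℝ :=
  ∑' k : ℕ, W n a k x * f (((k : ℝ) + α) / ((n : ℝ) + β))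

/-- Generalized Baskakov–Kantorovich–Stancu operator `T_{n,a}^{α,β}(f;x)`. -/
noncomputable def TKS (n : ℕ) (a α β : ℝ) (f : ℝ → ℝ) (x : ℝ) : ℝ :=
  ((n : ℝ) + β) *
    ∑' k : ℕ, W n a k x *
      ∫ t in (((k : ℝ) + α) / ((n : ℝ) + β))..(((k : ℝ) + α + 1) / ((n : ℝ) + β)), f t

lemma risingFac_nonneg (n i : ℕ) : 0 ≤ risingFac n i :=
  Finset.prod_nonneg fun j _ => by positivity

lemma risingFac_eq_ascFactorial (n i : ℕ) : risingFac n i = (n.ascFactorial i : ℝ) := by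
  induction i with
  | zero => simp [risingFac]
  | succ i ih =>
    rw [risingFac, Finset.prod_range_succ, ← risingFac, ih, Nat.ascFactorial_succ]
    push_cast; ring

lemma risingFac_succ (n i : ℕ) : risingFac n (i + 1) = n * risingFac (n + 1) i := by
  rw [risingFac, Finset.prod_range_succ', risingFac]
  push_cast
  rw [mul_comm]
  congr 1
  · norm_num
  · exact Finset.prod_congr rfl fun j _ => by push_cast; ring

lemma hasSum_risingFac (n : ℕ) (hn : 1 ≤ n) {t : ℝ} (ht0 : 0 ≤ t) (ht1 : t < 1) :
    HasSum (fun i : ℕ => risingFac n i * t ^ i / i.factorial) (1 / (1 - t) ^ n) := by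
  have h := hasSum_choose_mul_geometric_of_norm_lt_one (𝕜 := ℝ) (n - 1) (r := t)
    (by rw [Real.norm_eq_abs, abs_of_nonneg ht0]; exact ht1)
  rw [show n - 1 + 1 = n by omega] at h
  convert h using 2 with i
  · rfl
  rw [risingFac_eq_ascFactorial, Nat.ascFactorial_eq_factorial_mul_choose']
  have h1 : (n + i - 1).choose i = (i + (n - 1)).choose (n - 1) := by
    have h2 := Nat.choose_symm (n := i + (n - 1)) (k := n - 1) (Nat.le_add_left _ _)
    rw [Nat.add_sub_cancel] at h2
    rw [show n + i - 1 = i + (n - 1) by omega, ← h2]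
  rw [h1]
  have : (i.factorial : ℝ) ≠ 0 := by positivity
  push_cast
  field_simp

lemma hasSum_shift {f g : ℕ → ℝ} {c S : ℝ} (h : HasSum f S)
    (hg0 : g 0 = 0) (hgs : ∀ m, g (m + 1) = c * f m) :
    HasSum g (c * S) := by
  have h2 : HasSum (fun m => g (m + 1)) (c * S) := by
    simpa [hgs] using h.mul_left c
  have h3 := (hasSum_nat_add_iff (f := g) 1).mp h2
  simpa [hg0] using h3

lemma hasSum_exp_div (y : ℝ) : HasSum (fun j : ℕ => y ^ j / j.factorial) (Real.exp y) := by
  rw [Real.exp_eq_exp_ℝ]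
  exact NormedSpace.expSeries_div_hasSum_exp y

lemma hasSum_mul_exp_div (y : ℝ) :
    HasSum (fun j : ℕ => (j : ℝ) * (y ^ j / j.factorial)) (y * Real.exp y) := by
  refine hasSum_shift (hasSum_exp_div y) (by simp) fun m => ?_
  have hm : (m.factorial : ℝ) ≠ 0 := by positivity
  have hm1 : ((m : ℝ) + 1) ≠ 0 := by positivity
  rw [Nat.factorial_succ, pow_succ]
  push_cast
  field_simp

lemma hasSum_mul_risingFac (n : ℕ) (hn : 1 ≤ n) {t : ℝ} (ht0 : 0 ≤ t) (ht1 : t < 1) :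
    HasSum (fun i : ℕ => (i : ℝ) * (risingFac n i * t ^ i / i.factorial))
      ((n * t) * (1 / (1 - t) ^ (n + 1))) := by
  refine hasSum_shift (hasSum_risingFac (n + 1) (by omega) ht0 ht1) (by simp) fun m => ?_
  have hm : (m.factorial : ℝ) ≠ 0 := by positivity
  have hm1 : ((m : ℝ) + 1) ≠ 0 := by positivity
  rw [risingFac_succ, Nat.factorial_succ, pow_succ]
  push_cast
  field_simp

lemma term_eq (n k i j : ℕ) (a t : ℝ) (hij : i + j = k) :
    (k : ℝ) * ((k.choose i : ℝ) * risingFac n i * a ^ j) / k.factorial * t ^ k =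
      (i : ℝ) * (risingFac n i * t ^ i / i.factorial) * ((a * t) ^ j / j.factorial) +
        (risingFac n i * t ^ i / i.factorial) * ((j : ℝ) * ((a * t) ^ j / j.factorial)) := by
  have hik : i ≤ k := by omega
  have hC : k.choose i * i.factorial * j.factorial = k.factorial := by
    have h := Nat.choose_mul_factorial_mul_factorial hik
    rwa [show k - i = j by omega] at h
  have hCr : (k.choose i : ℝ) * i.factorial * j.factorial = k.factorial := by
    exact_mod_cast hC
  have hi : (i.factorial : ℝ) ≠ 0 := by positivity
  have hj : (j.factorial : ℝ) ≠ 0 := by positivity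
  have hk : (k.factorial : ℝ) ≠ 0 := by positivity
  subst hij
  rw [pow_add, mul_pow]
  push_cast
  field_simp
  linear_combination (((i : ℝ) + j) * risingFac n i * a ^ j * t ^ i * t ^ j) * hCr

theorem sum_k_W (a : ℝ) (ha : 0 ≤ a) (n : ℕ) (hn : 1 ≤ n) (x : ℝ) (hx : 0 ≤ x) :
    ∑' k : ℕ, (k : ℝ) * W n a k x = (n : ℝ) * x + a * x / (1 + x) := by
  have hx1 : (0:ℝ) < 1 + x := by linarith
  set t : ℝ := x / (1 + x) with htdef
  have ht0 : 0 ≤ t := div_nonneg hx hx1.le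
  have ht1 : t < 1 := (div_lt_one hx1).mpr (by linarith)
  have h1t : 1 - t = 1 / (1 + x) := by rw [htdef]; field_simp; ring
  set f₁ : ℕ → ℝ := fun i => (i : ℝ) * (risingFac n i * t ^ i / i.factorial) with hf1
  set f₂ : ℕ → ℝ := fun i => risingFac n i * t ^ i / i.factorial with hf2
  set g₁ : ℕ → ℝ := fun j => (a * t) ^ j / j.factorial with hg1
  set g₂ : ℕ → ℝ := fun j => (j : ℝ) * ((a * t) ^ j / j.factorial) with hg2
  have hA : HasSum f₁ ((n * t) * (1 / (1 - t) ^ (n + 1))) := hasSum_mul_risingFac n hn ht0 ht1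
  have hB : HasSum f₂ (1 / (1 - t) ^ n) := hasSum_risingFac n hn ht0 ht1
  have hC : HasSum g₁ (Real.exp (a * t)) := hasSum_exp_div (a * t)
  have hD : HasSum g₂ ((a * t) * Real.exp (a * t)) := hasSum_mul_exp_div (a * t)
  have hat : 0 ≤ a * t := mul_nonneg ha ht0
  have hf2nn : ∀ i, 0 ≤ f₂ i := fun i =>
    div_nonneg (mul_nonneg (risingFac_nonneg n i) (pow_nonneg ht0 i)) (Nat.cast_nonneg _)
  have hf1nn : ∀ i, 0 ≤ f₁ i := fun i => mul_nonneg (Nat.cast_nonneg _) (hf2nn i)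
  have hg1nn : ∀ j, 0 ≤ g₁ j := fun j => div_nonneg (pow_nonneg hat j) (Nat.cast_nonneg _)
  have hg2nn : ∀ j, 0 ≤ g₂ j := fun j => mul_nonneg (Nat.cast_nonneg _) (hg1nn j)
  have nf1 : Summable fun i => ‖f₁ i‖ := by
    have h : (fun i => ‖f₁ i‖) = f₁ := funext fun i => Real.norm_of_nonneg (hf1nn i)
    rw [h]; exact hA.summable
  have nf2 : Summable fun i => ‖f₂ i‖ := by
    have h : (fun i => ‖f₂ i‖) = f₂ := funext fun i => Real.norm_of_nonneg (hf2nn i)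
    rw [h]; exact hB.summable
  have ng1 : Summable fun j => ‖g₁ j‖ := by
    have h : (fun j => ‖g₁ j‖) = g₁ := funext fun j => Real.norm_of_nonneg (hg1nn j)
    rw [h]; exact hC.summable
  have ng2 : Summable fun j => ‖g₂ j‖ := by
    have h : (fun j => ‖g₂ j‖) = g₂ := funext fun j => Real.norm_of_nonneg (hg2nn j)
    rw [h]; exact hD.summable
  set E : ℝ := Real.exp (-(a * x) / (1 + x)) / (1 + x) ^ n with hEdef
  have hW : ∀ k : ℕ, (k : ℝ) * W n a k x =
      E * ∑ ij ∈ Finset.HasAntidiagonal.antidiagonal k, (f₁ ij.1 * g₁ ij.2 + f₂ ij.1 * g₂ ij.2) := by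
    intro k
    have hL : (k : ℝ) * W n a k x = E * ((k : ℝ) * pCoef n a k / k.factorial * t ^ k) := by
      rw [W, hEdef, htdef, pow_add, div_pow]
      have h1 : ((1:ℝ) + x) ≠ 0 := hx1.ne'
      have h2 : (k.factorial : ℝ) ≠ 0 := by positivity
      field_simp
    rw [hL]
    congr 1
    rw [pCoef, ← Finset.Nat.sum_antidiagonal_eq_sum_range_succ
      (fun i j => (k.choose i : ℝ) * risingFac n i * a ^ j) k]
    rw [Finset.mul_sum, Finset.sum_div, Finset.sum_mul]
    refine Finset.sum_congr rfl fun ij hij => ?_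
    rw [Finset.HasAntidiagonal.mem_antidiagonal] at hij
    exact term_eq n k ij.1 ij.2 a t hij
  have hS1 : Summable (fun k => ∑ ij ∈ Finset.HasAntidiagonal.antidiagonal k, f₁ ij.1 * g₁ ij.2) :=
    (summable_norm_sum_mul_antidiagonal_of_summable_norm nf1 ng1).of_norm
  have hS2 : Summable (fun k => ∑ ij ∈ Finset.HasAntidiagonal.antidiagonal k, f₂ ij.1 * g₂ ij.2) :=
    (summable_norm_sum_mul_antidiagonal_of_summable_norm nf2 ng2).of_norm
  calc ∑' k : ℕ, (k : ℝ) * W n a k x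
      = ∑' k : ℕ, E * ∑ ij ∈ Finset.HasAntidiagonal.antidiagonal k, (f₁ ij.1 * g₁ ij.2 + f₂ ij.1 * g₂ ij.2) :=
        tsum_congr hW
    _ = E * ∑' k : ℕ, ((∑ ij ∈ Finset.HasAntidiagonal.antidiagonal k, f₁ ij.1 * g₁ ij.2) +
          ∑ ij ∈ Finset.HasAntidiagonal.antidiagonal k, f₂ ij.1 * g₂ ij.2) := by
        rw [tsum_mul_left]
        congr 1
        exact tsum_congr fun k => by rw [Finset.sum_add_distrib]
    _ = E * ((∑' k : ℕ, ∑ ij ∈ Finset.HasAntidiagonal.antidiagonal k, f₁ ij.1 * g₁ ij.2) +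
          ∑' k : ℕ, ∑ ij ∈ Finset.HasAntidiagonal.antidiagonal k, f₂ ij.1 * g₂ ij.2) := by
        rw [Summable.tsum_add hS1 hS2]
    _ = E * ((∑' i, f₁ i) * (∑' j, g₁ j) + (∑' i, f₂ i) * (∑' j, g₂ j)) := by
        rw [tsum_mul_tsum_eq_tsum_sum_antidiagonal_of_summable_norm nf1 ng1,
          tsum_mul_tsum_eq_tsum_sum_antidiagonal_of_summable_norm nf2 ng2]
    _ = E * (((n * t) * (1 / (1 - t) ^ (n + 1))) * Real.exp (a * t) +
          (1 / (1 - t) ^ n) * ((a * t) * Real.exp (a * t))) := by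
        rw [hA.tsum_eq, hB.tsum_eq, hC.tsum_eq, hD.tsum_eq]
    _ = (n : ℝ) * x + a * x / (1 + x) := by
        have e1 : (1:ℝ) / (1 - t) ^ (n + 1) = (1 + x) ^ (n + 1) := by
          rw [h1t, one_div, one_div, inv_pow, inv_inv]
        have e2 : (1:ℝ) / (1 - t) ^ n = (1 + x) ^ n := by
          rw [h1t, one_div, one_div, inv_pow, inv_inv]
        have e3 : -(a * x) / (1 + x) = -(a * t) := by rw [htdef]; ring
        rw [hEdef, e1, e2, e3, Real.exp_neg, htdef]
        have h1 : ((1:ℝ) + x) ≠ 0 := hx1.ne'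
        have h2 : Real.exp (a * (x / (1 + x))) ≠ 0 := Real.exp_ne_zero _
        have h3 : ((1:ℝ) + x) ^ n ≠ 0 := pow_ne_zero _ h1
        field_simp
        ring
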